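/- Let m be a positive integer and q = 2^m. The pentanomial f(x) = x^{96q+1} + x^{65q+32} + x^{33q+64} + x^{32q+65} + x^{97} is a permutation polynomial of the finite field F_{q^2} if and only if m is not divisible by 24. -/

import Mathlib

set_option maxHeartbeats 4000000

/-- Theorem 1.1: Let `q = 2^m`. Then
`f(x) = x^{96q+1} + x^{65q+32} + x^{33q+64} + x^{32q+65} + x^{97}`
permutes `F_{q^2}` if and only if `m ≢ 0 (mod 24)`. -/
theorem pentanomial_family17_perm_iff
    (m : ℕ) (hm : 0 < m) (q : ℕ) (hq : q = 2 ^ m)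
    (F : Type*) [Field F] [Fintype F] (hF : Fintype.card F = q ^ 2) :
    Function.Bijective (fun x : F =>
      x ^ (96 * q + 1) + x ^ (65 * q + 32) + x ^ (33 * q + 64) +
        x ^ (32 * q + 65) + x ^ 97) ↔ ¬ (24 ∣ m) := by
  classical
  -- ## Characteristic 2
  obtain ⟨p, hp⟩ := CharP.exists F
  haveI := hp
  obtain ⟨n, hpprime, hcard⟩ := FiniteField.card F p
  have hcard2 : Fintype.card F = 2 ^ (2 * m) := by
    rw [hF, hq, ← pow_mul, mul_comm]
  have hp2 : p = 2 := by
    have hd : p ∣ 2 ^ (2 * m) := by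
      rw [← hcard2, hcard]
      exact dvd_pow_self p (by exact_mod_cast n.pos.ne')
    exact (Nat.prime_dvd_prime_iff_eq hpprime Nat.prime_two).mp
      (hpprime.dvd_of_dvd_pow hd)
  haveI hchar : CharP F 2 := by rwa [hp2] at hp
  haveI : Fact (Nat.Prime 2) := ⟨Nat.prime_two⟩
  have htwo : (2 : F) = 0 := by exact_mod_cast CharP.cast_eq_zero F 2
  -- ## Frobenius basics
  have hfrob : ∀ a b : F, (a + b) ^ q = a ^ q + b ^ q := by
    intro a b; rw [hq]; exact add_pow_char_pow a b 2 m
  have hqpow : ∀ a : F, (a ^ q) ^ q = a := by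
    intro a
    rw [← pow_mul, show q * q = q ^ 2 by ring, ← hF]
    exact FiniteField.pow_card a
  have hswap : ∀ (a : F) (k : ℕ), (a ^ k) ^ q = (a ^ q) ^ k := by
    intro a k; rw [← pow_mul, mul_comm, pow_mul]
  have hterm : ∀ (a : F) (k : ℕ), ((a ^ q) ^ k) ^ q = a ^ k := by
    intro a k; rw [hswap (a ^ q) k, hqpow a]
  -- ## the cube root of unity ω (called w here)
  haveI : Fact (Nat.Prime 3) := ⟨by norm_num⟩
  have hcardu : Fintype.card Fˣ = 2 ^ (2 * m) - 1 := by
    rw [Fintype.card_units, hcard2]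
  have h3card : (3 : ℕ) ∣ Fintype.card Fˣ := by
    rw [hcardu]
    have h1 : (3 : ℕ) ∣ 4 ^ m - 1 := by
      simpa using Nat.sub_dvd_pow_sub_pow 4 1 m
    have h2 : (4 : ℕ) ^ m = 2 ^ (2 * m) := by
      rw [show (4 : ℕ) = 2 ^ 2 from rfl, ← pow_mul]
    rwa [h2] at h1
  obtain ⟨ζ3, hζ3⟩ := exists_prime_orderOf_dvd_card 3 h3card
  set w : F := ((ζ3 : Fˣ) : F) with hwdef
  have hw3 : w ^ 3 = 1 := by
    have h1 : ζ3 ^ 3 = 1 := by rw [← hζ3]; exact pow_orderOf_eq_one ζ3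
    have h2 := congrArg (Units.val) h1
    push_cast at h2
    rw [hwdef]
    exact h2
  have hwne : w ≠ 1 := by
    intro h
    rw [hwdef] at h
    have h1 : ζ3 = 1 := Units.ext (by simpa using h)
    rw [h1] at hζ3; simp at hζ3
  have hw : w ^ 2 + w + 1 = 0 := by
    have hfac : (w - 1) * (w ^ 2 + w + 1) = 0 := by linear_combination hw3
    rcases mul_eq_zero.mp hfac with h | h
    · exact absurd (sub_eq_zero.mp h) hwne
    · exact h
  -- ## The key algebraic identities
  have sq1 : ∀ a b : F, (w * a + w ^ 2 * b) ^ 2 = w ^ 2 * a ^ 2 + w * b ^ 2 := by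
    intro a b
    linear_combination ((-2 : F) * a * b + (-1 : F) * w * b ^ 2 + (2 : F) * w * a * b
      + w ^ 2 * b ^ 2) * hw + (a * b) * htwo
  have sq2 : ∀ a b : F, (w ^ 2 * a + w * b) ^ 2 = w * a ^ 2 + w ^ 2 * b ^ 2 := by
    intro a b
    linear_combination ((-2 : F) * a * b + (2 : F) * w * a * b + (-1 : F) * w * a ^ 2
      + w ^ 2 * a ^ 2) * hw + (a * b) * htwo
  have mainP : ∀ x y : F, (w ^ 2 * x + w * y) ^ 97 =
      w ^ 2 * (x * y ^ 96 + x ^ 32 * y ^ 65 + x ^ 64 * y ^ 33 + x ^ 65 * y ^ 32 + x ^ 97)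
      + w * (x ^ 96 * y + x ^ 65 * y ^ 32 + x ^ 33 * y ^ 64 + x ^ 32 * y ^ 65 + y ^ 97) := by
    intro x y
    have h2 : (w ^ 2 * x + w * y) ^ 2 = w * x ^ 2 + w ^ 2 * y ^ 2 := sq2 x y
    have h4 : (w ^ 2 * x + w * y) ^ 4 = w ^ 2 * x ^ 4 + w * y ^ 4 := by
      have e := sq1 (x ^ 2) (y ^ 2)
      linear_combination ((w ^ 2 * x + w * y) ^ 2 + (w * x ^ 2 + w ^ 2 * y ^ 2)) * h2 + e
    have h8 : (w ^ 2 * x + w * y) ^ 8 = w * x ^ 8 + w ^ 2 * y ^ 8 := by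
      have e := sq2 (x ^ 4) (y ^ 4)
      linear_combination ((w ^ 2 * x + w * y) ^ 4 + (w ^ 2 * x ^ 4 + w * y ^ 4)) * h4 + e
    have h16 : (w ^ 2 * x + w * y) ^ 16 = w ^ 2 * x ^ 16 + w * y ^ 16 := by
      have e := sq1 (x ^ 8) (y ^ 8)
      linear_combination ((w ^ 2 * x + w * y) ^ 8 + (w * x ^ 8 + w ^ 2 * y ^ 8)) * h8 + e
    have h32 : (w ^ 2 * x + w * y) ^ 32 = w * x ^ 32 + w ^ 2 * y ^ 32 := by
      have e := sq2 (x ^ 16) (y ^ 16)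
      linear_combination ((w ^ 2 * x + w * y) ^ 16 + (w ^ 2 * x ^ 16 + w * y ^ 16)) * h16 + e
    have h64 : (w ^ 2 * x + w * y) ^ 64 = w ^ 2 * x ^ 64 + w * y ^ 64 := by
      have e := sq1 (x ^ 32) (y ^ 32)
      linear_combination ((w ^ 2 * x + w * y) ^ 32 + (w * x ^ 32 + w ^ 2 * y ^ 32)) * h32 + e
    have big : (w ^ 2 * x ^ 64 + w * y ^ 64) * (w * x ^ 32 + w ^ 2 * y ^ 32) * (w ^ 2 * x + w * y)
        = w ^ 2 * (x * y ^ 96 + x ^ 32 * y ^ 65 + x ^ 64 * y ^ 33 + x ^ 65 * y ^ 32 + x ^ 97)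
        + w * (x ^ 96 * y + x ^ 65 * y ^ 32 + x ^ 33 * y ^ 64 + x ^ 32 * y ^ 65 + y ^ 97) := by
      linear_combination ((-2 : F) * x ^ 32 * y ^ 65 + (-2 : F) * x ^ 65 * y ^ 32
        + (-1 : F) * w * y ^ 97 + w * x ^ 32 * y ^ 65 + (-1 : F) * w * x ^ 33 * y ^ 64
        + w * x ^ 65 * y ^ 32 + (-1 : F) * w * x ^ 96 * y + w ^ 2 * y ^ 97
        + (-1 : F) * w ^ 2 * x * y ^ 96 + w ^ 2 * x ^ 33 * y ^ 64
        + (-1 : F) * w ^ 2 * x ^ 64 * y ^ 33 + w ^ 2 * x ^ 96 * y + (-1 : F) * w ^ 2 * x ^ 97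
        + w ^ 3 * x * y ^ 96 + w ^ 3 * x ^ 64 * y ^ 33 + (-1 : F) * w ^ 3 * x ^ 65 * y ^ 32
        + w ^ 3 * x ^ 97 + w ^ 4 * x ^ 65 * y ^ 32) * hw
        + (x ^ 32 * y ^ 65 + x ^ 65 * y ^ 32) * htwo
    linear_combination ((w ^ 2 * x + w * y) ^ 32 * (w ^ 2 * x + w * y)) * h64
      + ((w ^ 2 * x ^ 64 + w * y ^ 64) * (w ^ 2 * x + w * y)) * h32 + big
  have mainQ : ∀ x y : F, (w * x + w ^ 2 * y) ^ 97 =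
      w * (x * y ^ 96 + x ^ 32 * y ^ 65 + x ^ 64 * y ^ 33 + x ^ 65 * y ^ 32 + x ^ 97)
      + w ^ 2 * (x ^ 96 * y + x ^ 65 * y ^ 32 + x ^ 33 * y ^ 64 + x ^ 32 * y ^ 65 + y ^ 97) := by
    intro x y
    have h2 : (w * x + w ^ 2 * y) ^ 2 = w ^ 2 * x ^ 2 + w * y ^ 2 := sq1 x y
    have h4 : (w * x + w ^ 2 * y) ^ 4 = w * x ^ 4 + w ^ 2 * y ^ 4 := by
      have e := sq2 (x ^ 2) (y ^ 2)
      linear_combination ((w * x + w ^ 2 * y) ^ 2 + (w ^ 2 * x ^ 2 + w * y ^ 2)) * h2 + e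
    have h8 : (w * x + w ^ 2 * y) ^ 8 = w ^ 2 * x ^ 8 + w * y ^ 8 := by
      have e := sq1 (x ^ 4) (y ^ 4)
      linear_combination ((w * x + w ^ 2 * y) ^ 4 + (w * x ^ 4 + w ^ 2 * y ^ 4)) * h4 + e
    have h16 : (w * x + w ^ 2 * y) ^ 16 = w * x ^ 16 + w ^ 2 * y ^ 16 := by
      have e := sq2 (x ^ 8) (y ^ 8)
      linear_combination ((w * x + w ^ 2 * y) ^ 8 + (w ^ 2 * x ^ 8 + w * y ^ 8)) * h8 + e
    have h32 : (w * x + w ^ 2 * y) ^ 32 = w ^ 2 * x ^ 32 + w * y ^ 32 := by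
      have e := sq1 (x ^ 16) (y ^ 16)
      linear_combination ((w * x + w ^ 2 * y) ^ 16 + (w * x ^ 16 + w ^ 2 * y ^ 16)) * h16 + e
    have h64 : (w * x + w ^ 2 * y) ^ 64 = w * x ^ 64 + w ^ 2 * y ^ 64 := by
      have e := sq2 (x ^ 32) (y ^ 32)
      linear_combination ((w * x + w ^ 2 * y) ^ 32 + (w ^ 2 * x ^ 32 + w * y ^ 32)) * h32 + e
    have big : (w * x ^ 64 + w ^ 2 * y ^ 64) * (w ^ 2 * x ^ 32 + w * y ^ 32) * (w * x + w ^ 2 * y)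
        = w * (x * y ^ 96 + x ^ 32 * y ^ 65 + x ^ 64 * y ^ 33 + x ^ 65 * y ^ 32 + x ^ 97)
        + w ^ 2 * (x ^ 96 * y + x ^ 65 * y ^ 32 + x ^ 33 * y ^ 64 + x ^ 32 * y ^ 65 + y ^ 97) := by
      linear_combination ((-2 : F) * x ^ 32 * y ^ 65 + (-2 : F) * x ^ 65 * y ^ 32
        + (-1 : F) * w * x * y ^ 96 + w * x ^ 32 * y ^ 65 + (-1 : F) * w * x ^ 64 * y ^ 33
        + w * x ^ 65 * y ^ 32 + (-1 : F) * w * x ^ 97 + (-1 : F) * w ^ 2 * y ^ 97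
        + w ^ 2 * x * y ^ 96 + (-1 : F) * w ^ 2 * x ^ 33 * y ^ 64 + w ^ 2 * x ^ 64 * y ^ 33
        + (-1 : F) * w ^ 2 * x ^ 96 * y + w ^ 2 * x ^ 97 + w ^ 3 * y ^ 97
        + (-1 : F) * w ^ 3 * x ^ 32 * y ^ 65 + w ^ 3 * x ^ 33 * y ^ 64 + w ^ 3 * x ^ 96 * y
        + w ^ 4 * x ^ 32 * y ^ 65) * hw
        + (x ^ 32 * y ^ 65 + x ^ 65 * y ^ 32) * htwo
    linear_combination ((w * x + w ^ 2 * y) ^ 32 * (w * x + w ^ 2 * y)) * h64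
      + ((w * x ^ 64 + w ^ 2 * y ^ 64) * (w * x + w ^ 2 * y)) * h32 + big
  -- ## Rewriting the pentanomial and its Frobenius
  have hfval : ∀ x : F, x ^ (96 * q + 1) + x ^ (65 * q + 32) + x ^ (33 * q + 64)
      + x ^ (32 * q + 65) + x ^ 97
      = x * (x ^ q) ^ 96 + x ^ 32 * (x ^ q) ^ 65 + x ^ 64 * (x ^ q) ^ 33
        + x ^ 65 * (x ^ q) ^ 32 + x ^ 97 := by
    intro x
    rw [show 96 * q + 1 = q * 96 + 1 by ring, show 65 * q + 32 = q * 65 + 32 by ring,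
      show 33 * q + 64 = q * 33 + 64 by ring, show 32 * q + 65 = q * 32 + 65 by ring]
    simp only [pow_add, pow_mul, pow_one]
    ring
  have hfq : ∀ x : F, (x * (x ^ q) ^ 96 + x ^ 32 * (x ^ q) ^ 65 + x ^ 64 * (x ^ q) ^ 33
      + x ^ 65 * (x ^ q) ^ 32 + x ^ 97) ^ q
      = x ^ 96 * (x ^ q) + x ^ 65 * (x ^ q) ^ 32 + x ^ 33 * (x ^ q) ^ 64
        + x ^ 32 * (x ^ q) ^ 65 + (x ^ q) ^ 97 := by
    intro x
    rw [hfrob, hfrob, hfrob, hfrob, mul_pow, mul_pow, mul_pow, mul_pow,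
      hterm x 96, hterm x 65, hterm x 33, hterm x 32,
      hswap x 32, hswap x 64, hswap x 65, hswap x 97]
    ring
  have keyP : ∀ x : F,
      w ^ 2 * (x * (x ^ q) ^ 96 + x ^ 32 * (x ^ q) ^ 65 + x ^ 64 * (x ^ q) ^ 33
        + x ^ 65 * (x ^ q) ^ 32 + x ^ 97)
      + w * (x ^ 96 * (x ^ q) + x ^ 65 * (x ^ q) ^ 32 + x ^ 33 * (x ^ q) ^ 64
        + x ^ 32 * (x ^ q) ^ 65 + (x ^ q) ^ 97)
      = (w ^ 2 * x + w * x ^ q) ^ 97 := fun x => (mainP x (x ^ q)).symm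
  have keyQ : ∀ x : F,
      w * (x * (x ^ q) ^ 96 + x ^ 32 * (x ^ q) ^ 65 + x ^ 64 * (x ^ q) ^ 33
        + x ^ 65 * (x ^ q) ^ 32 + x ^ 97)
      + w ^ 2 * (x ^ 96 * (x ^ q) + x ^ 65 * (x ^ q) ^ 32 + x ^ 33 * (x ^ q) ^ 64
        + x ^ 32 * (x ^ q) ^ 65 + (x ^ q) ^ 97)
      = (w * x + w ^ 2 * x ^ q) ^ 97 := fun x => (mainQ x (x ^ q)).symm
  clear mainP mainQ
  have hsqm1 : (w ^ 2 + w) ^ 2 = 1 := by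
    linear_combination (w ^ 2 - w + 1) * hw + (w ^ 3 - 1) * htwo
  constructor
  · -- bijective → ¬ 24 ∣ m
    intro hbij h24
    obtain ⟨k, hk⟩ := h24
    haveI : Fact (Nat.Prime 97) := ⟨by norm_num⟩
    have hdvd97 : (97 : ℕ) ∣ Fintype.card Fˣ := by
      rw [hcardu, hk]
      have h1 : (97 : ℕ) ∣ 2 ^ 48 - 1 := by norm_num
      have h2 : ((2 : ℕ) ^ 48 - 1) ∣ 2 ^ (2 * (24 * k)) - 1 := by
        have h3 := Nat.sub_dvd_pow_sub_pow ((2:ℕ) ^ 48) 1 k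
        rw [one_pow, ← pow_mul] at h3
        rwa [show 2 * (24 * k) = 48 * k by ring]
      exact h1.trans h2
    obtain ⟨ζ, hζ⟩ := exists_prime_orderOf_dvd_card 97 hdvd97
    -- m is even hence w^q = w
    have h3d : (3 : ℕ) ∣ 2 ^ m - 1 := by
      have h1 : (3 : ℕ) ∣ 4 ^ (12 * k) - 1 := by
        simpa using Nat.sub_dvd_pow_sub_pow 4 1 (12 * k)
      have h2 : (4 : ℕ) ^ (12 * k) = 2 ^ m := by
        rw [show (4 : ℕ) = 2 ^ 2 from rfl, ← pow_mul, hk]; ring_nf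
      rwa [h2] at h1
    obtain ⟨t, ht⟩ := h3d
    have h2mt : 2 ^ m = 3 * t + 1 := by
      have := Nat.one_le_two_pow (n := m)
      omega
    have hwq : w ^ q = w := by
      rw [hq, h2mt, pow_add, pow_mul, hw3, one_pow, pow_one, one_mul]
    -- the linear map x ↦ w²x + w x^q is injective hence surjective
    have hPinj : Function.Injective (fun a : F => w ^ 2 * a + w * a ^ q) := by
      intro a b hab
      dsimp only at hab
      have hc0 : w ^ 2 * (a + b) + w * ((a + b) ^ q) = 0 := by
        rw [hfrob a b]
        linear_combination hab + (w ^ 2 * b + w * b ^ q) * htwo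
      by_cases hc : a + b = 0
      · linear_combination hc - b * htwo
      · exfalso
        have hcq : (a + b) ^ q = w * (a + b) := by
          linear_combination (w ^ 2) * hc0 + ((1 - w) * ((a + b) ^ q)
            - (w ^ 2 - w) * (a + b)) * hw + (-(w * (a + b))) * htwo
        have he : (a + b) = w ^ 2 * (a + b) := by
          calc a + b = ((a + b) ^ q) ^ q := (hqpow _).symm
          _ = (w * (a + b)) ^ q := by rw [hcq]
          _ = w ^ q * ((a + b) ^ q) := mul_pow _ _ _
          _ = w * (w * (a + b)) := by rw [hwq, hcq]
          _ = w ^ 2 * (a + b) := by ring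
        have h9 : (w ^ 2 - 1) * (a + b) = 0 := by linear_combination -he
        rcases mul_eq_zero.mp h9 with h10 | h10
        · have hw2 : w ^ 2 = 1 := by linear_combination h10
          have h11 : w * w ^ 2 = w ^ 3 := by ring
          rw [hw2, hw3, mul_one] at h11
          exact hwne h11
        · exact hc h10
    have hPsurj : Function.Surjective (fun a : F => w ^ 2 * a + w * a ^ q) :=
      Finite.injective_iff_surjective.mp hPinj
    obtain ⟨x2, hx2⟩ := hPsurj ((ζ : Fˣ) : F)
    have hx2' : w ^ 2 * x2 + w * x2 ^ q = ((ζ : Fˣ) : F) := hx2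
    have hζ97 : ((ζ : Fˣ) : F) ^ 97 = 1 := by
      have h1 : ζ ^ 97 = 1 := by rw [← hζ]; exact pow_orderOf_eq_one ζ
      have h2 := congrArg (Units.val) h1
      push_cast at h2
      exact h2
    -- Q-coordinate of x2
    have hPq : ∀ a : F, (w ^ 2 * a + w * a ^ q) ^ q = w * a + w ^ 2 * a ^ q := by
      intro a
      rw [hfrob, mul_pow, mul_pow, hqpow a, hswap w 2, hwq]
      ring
    have hQx2 : w * x2 + w ^ 2 * x2 ^ q = ((ζ : Fˣ) : F) ^ q := by
      rw [← hx2', hPq x2]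
    -- the identity  f(x) = w²·P^97 + w·Q^97
    have hfid : ∀ x : F, x * (x ^ q) ^ 96 + x ^ 32 * (x ^ q) ^ 65 + x ^ 64 * (x ^ q) ^ 33
        + x ^ 65 * (x ^ q) ^ 32 + x ^ 97
        = w ^ 2 * (w ^ 2 * x + w * x ^ q) ^ 97 + w * (w * x + w ^ 2 * x ^ q) ^ 97 := by
      intro x
      linear_combination (w ^ 2) * (keyP x) + w * (keyQ x)
        + (-(w ^ 2 - w + 1) * (x * (x ^ q) ^ 96 + x ^ 32 * (x ^ q) ^ 65 + x ^ 64 * (x ^ q) ^ 33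
            + x ^ 65 * (x ^ q) ^ 32 + x ^ 97)) * hw
        + ((x * (x ^ q) ^ 96 + x ^ 32 * (x ^ q) ^ 65 + x ^ 64 * (x ^ q) ^ 33
            + x ^ 65 * (x ^ q) ^ 32 + x ^ 97)
          - w ^ 3 * (x ^ 96 * (x ^ q) + x ^ 65 * (x ^ q) ^ 32 + x ^ 33 * (x ^ q) ^ 64
            + x ^ 32 * (x ^ q) ^ 65 + (x ^ q) ^ 97)) * htwo
    have h97w : (w ^ 2 + w) ^ 97 = w ^ 2 + w := by
      calc (w ^ 2 + w) ^ 97 = ((w ^ 2 + w) ^ 2) ^ 48 * (w ^ 2 + w) := by ring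
      _ = w ^ 2 + w := by rw [hsqm1, one_pow, one_mul]
    -- the collision:  f x2 = f 1
    have hcol : x2 ^ (96 * q + 1) + x2 ^ (65 * q + 32) + x2 ^ (33 * q + 64)
        + x2 ^ (32 * q + 65) + x2 ^ 97
        = (1 : F) ^ (96 * q + 1) + 1 ^ (65 * q + 32) + 1 ^ (33 * q + 64)
          + 1 ^ (32 * q + 65) + 1 ^ 97 := by
      rw [hfval x2, hfval 1, hfid x2, hfid 1, hx2', hQx2, hζ97,
        ← hswap ((ζ : Fˣ) : F) 97, hζ97]
      simp only [one_pow, mul_one]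
      rw [show w + w ^ 2 = w ^ 2 + w from add_comm _ _, h97w]
      linear_combination (w - w ^ 2) * hw + (-(w ^ 3)) * htwo
    have hne : x2 ≠ 1 := by
      intro h
      rw [h] at hx2'
      simp only [one_pow, mul_one] at hx2'
      have hval2 : ((ζ : Fˣ) : F) ^ 2 = 1 := by rw [← hx2']; exact hsqm1
      have hu2 : ζ ^ 2 = 1 := Units.ext (by push_cast; exact hval2)
      have hdd := orderOf_dvd_of_pow_eq_one hu2
      rw [hζ] at hdd
      norm_num at hdd
    exact hne (hbij.injective hcol)
  · -- ¬ 24 ∣ m → bijective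
    intro h24
    apply Finite.injective_iff_bijective.mp
    intro x1 x2 hx
    dsimp only at hx
    rw [hfval x1, hfval x2] at hx
    have hxq : (x1 ^ 96 * (x1 ^ q) + x1 ^ 65 * (x1 ^ q) ^ 32 + x1 ^ 33 * (x1 ^ q) ^ 64
        + x1 ^ 32 * (x1 ^ q) ^ 65 + (x1 ^ q) ^ 97)
        = (x2 ^ 96 * (x2 ^ q) + x2 ^ 65 * (x2 ^ q) ^ 32 + x2 ^ 33 * (x2 ^ q) ^ 64
          + x2 ^ 32 * (x2 ^ q) ^ 65 + (x2 ^ q) ^ 97) := by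
      rw [← hfq x1, ← hfq x2, hx]
    have hP : (w ^ 2 * x1 + w * x1 ^ q) ^ 97 = (w ^ 2 * x2 + w * x2 ^ q) ^ 97 := by
      rw [← keyP x1, ← keyP x2, hx, hxq]
    have hQ : (w * x1 + w ^ 2 * x1 ^ q) ^ 97 = (w * x2 + w ^ 2 * x2 ^ q) ^ 97 := by
      rw [← keyQ x1, ← keyQ x2, hx, hxq]
    -- 97 is coprime to q² - 1
    have hno : ¬ ((97 : ℕ) ∣ Fintype.card F - 1) := by
      intro hdvd
      apply h24
      rw [hcard2] at hdvd
      have h2m1 : (1 : ℕ) ≤ 2 ^ (2 * m) := Nat.one_le_two_pow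
      have h1 : ((2 : ZMod 97)) ^ (2 * m) = 1 := by
        have hc := (ZMod.natCast_eq_zero_iff (2 ^ (2 * m) - 1) 97).mpr hdvd
        rw [Nat.cast_sub h2m1] at hc
        push_cast at hc
        exact sub_eq_zero.mp hc
      have h48 : (2 : ZMod 97) ^ 48 = 1 := by decide
      have hrlt : (2 * m) % 48 < 48 := Nat.mod_lt _ (by norm_num)
      have h1r : (2 : ZMod 97) ^ ((2 * m) % 48) = 1 := by
        rw [← Nat.div_add_mod (2 * m) 48] at h1
        rwa [pow_add, pow_mul, h48, one_pow, one_mul] at h1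
      have hr0 : (2 * m) % 48 = 0 := by
        have hfin : ∀ r : Fin 48, (2 : ZMod 97) ^ (r : ℕ) = 1 → (r : ℕ) = 0 := by decide
        exact hfin ⟨(2 * m) % 48, hrlt⟩ h1r
      have h48d : (48 : ℕ) ∣ 2 * m := Nat.dvd_of_mod_eq_zero hr0
      omega
    have hcop : Nat.Coprime 97 (Fintype.card F - 1) :=
      (Nat.Prime.coprime_iff_not_dvd (by norm_num)).mpr hno
    have hcard4 : 4 ≤ Fintype.card F := by
      rw [hcard2]
      calc (4 : ℕ) = 2 ^ 2 := rfl
      _ ≤ 2 ^ (2 * m) := Nat.pow_le_pow_right (by norm_num) (by omega)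
    have hp97 : ∀ a b : F, a ^ 97 = b ^ 97 → a = b := by
      intro a b hab
      rcases eq_or_ne a 0 with ha | ha
      · rcases eq_or_ne b 0 with hb | hb
        · rw [ha, hb]
        · exfalso
          apply hb
          have hb97 : b ^ 97 = 0 := by rw [← hab, ha, zero_pow]; norm_num
          exact pow_eq_zero_iff (by norm_num) |>.mp hb97
      · rcases eq_or_ne b 0 with hb | hb
        · exfalso
          apply ha
          have ha97 : a ^ 97 = 0 := by rw [hab, hb, zero_pow]; norm_num
          exact pow_eq_zero_iff (by norm_num) |>.mp ha97
        · obtain ⟨c, -, hc⟩ := Nat.exists_mul_mod_eq_one_of_coprime hcop (by omega)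
          have key : ∀ z : F, z ≠ 0 → z ^ (97 * c) = z := by
            intro z hz
            conv_lhs => rw [← Nat.div_add_mod (97 * c) (Fintype.card F - 1)]
            rw [pow_add, pow_mul, FiniteField.pow_card_sub_one_eq_one z hz, one_pow,
              one_mul, hc, pow_one]
          calc a = a ^ (97 * c) := (key a ha).symm
          _ = (a ^ 97) ^ c := by rw [pow_mul]
          _ = (b ^ 97) ^ c := by rw [hab]
          _ = b ^ (97 * c) := by rw [← pow_mul]
          _ = b := key b hb
    have hPe := hp97 _ _ hP
    have hQe := hp97 _ _ hQ
    linear_combination (w ^ 2) * hPe + w * hQe + (-(w ^ 2 - w + 1) * (x1 - x2)) * hw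
      + ((x1 - x2) - w ^ 3 * (x1 ^ q - x2 ^ q)) * htwo
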